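/- Let G be a finite group and suppose a Sylow p-subgroup S satisfies the trivial intersection property and G has no element of order pq for a prime q ≠ p. Then the normalizer N = N_G(S) is a Frobenius group with kernel S: the quotient W = N/S acts freely on S by conjugation, i.e., for each coset representative x ∈ N \ S and each nontrivial s ∈ S, x s x⁻¹ ≠ s. -/

import Mathlib

theorem stmt17 (p : ℕ) [Fact p.Prime] (G : Type*) [Group G] [Finite G]
    (hiso : ∀ g : G, ∀ q : ℕ, q.Prime → q ≠ p → orderOf g ≠ p * q)
    (S : Sylow p G)
    (hTI : ∀ g : G, g ∉ Subgroup.normalizer ((S : Subgroup G) : Set G) →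
      (S : Subgroup G) ⊓ (S : Subgroup G).map (MulAut.conj g).toMonoidHom = ⊥) :
    ∀ x ∈ Subgroup.normalizer ((S : Subgroup G) : Set G), x ∉ (S : Subgroup G) →
      ∀ s ∈ (S : Subgroup G), s ≠ 1 → x * s * x⁻¹ ≠ s := by
  intro x hx hxS s hs hs1 heq
  have hp : p.Prime := Fact.out
  have hcomm : Commute x s := (mul_inv_eq_iff_eq_mul.mp heq)
  -- orderOf s is a power of p, extract an element of order p
  obtain ⟨k, hk⟩ := IsPGroup.iff_orderOf.mp S.2 ⟨s, hs⟩
  rw [Subgroup.orderOf_mk] at hk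
  have hsne : orderOf s ≠ 0 := orderOf_pos s |>.ne'
  have hk0 : k ≠ 0 := by
    rintro rfl
    exact hs1 (orderOf_eq_one_iff.mp (by simpa using hk))
  have hpds : p ∣ orderOf s := hk ▸ dvd_pow_self p hk0
  set s' := s ^ (orderOf s / p) with hs'def
  have hords' : orderOf s' = p := orderOf_pow_orderOf_div hsne hpds
  have hs'S : s' ∈ (S : Subgroup G) := Subgroup.pow_mem _ hs _
  -- x has a prime factor q ≠ p in its order
  have hxne : orderOf x ≠ 0 := orderOf_pos x |>.ne'
  have hnotppow : ¬ ∃ a, orderOf x = p ^ a := by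
    rintro ⟨a, ha⟩
    have hpgrp : IsPGroup p (Subgroup.zpowers x) := by
      rw [IsPGroup.iff_orderOf]
      rintro ⟨g, hg⟩
      rw [Subgroup.orderOf_mk]
      have : orderOf g ∣ p ^ a := ha ▸ orderOf_dvd_of_mem_zpowers hg
      obtain ⟨b, _, hb⟩ := (Nat.dvd_prime_pow hp).mp this
      exact ⟨b, hb⟩
    have hle : Subgroup.zpowers x ≤ Subgroup.normalizer (S : Set G) :=
      Subgroup.zpowers_le.mpr hx
    have := hpgrp.inf_normalizer_sylow S
    rw [inf_eq_left.mpr hle] at this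
    have hxin : Subgroup.zpowers x ≤ (S : Subgroup G) :=
      (le_of_eq this).trans inf_le_right
    exact hxS (hxin (Subgroup.mem_zpowers x))
  -- get prime q ≠ p dividing orderOf x
  set n := orderOf x
  set m := n / p ^ n.factorization p with hm
  have hm1 : m ≠ 1 := by
    intro h1
    refine hnotppow ⟨n.factorization p, ?_⟩
    have h2 := Nat.ordProj_mul_ordCompl_eq_self n p
    rw [← hm, h1, mul_one] at h2
    exact h2.symm
  set q := m.minFac with hqdef
  have hq : q.Prime := Nat.minFac_prime hm1
  have hqn : q ∣ n := (Nat.minFac_dvd m).trans (Nat.ordCompl_dvd n p)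
  have hqp : q ≠ p := by
    intro h
    have hqm : q ∣ m := Nat.minFac_dvd m
    rw [h] at hqm
    exact Nat.not_dvd_ordCompl hp hxne hqm
  set z := x ^ (n / q) with hzdef
  have hordz : orderOf z = q := orderOf_pow_orderOf_div hxne hqn
  have hcz : Commute z s' := (hcomm.pow_pow _ _)
  have hcop : Nat.Coprime (orderOf z) (orderOf s') := by
    rw [hordz, hords']
    exact (Nat.coprime_primes hq hp).mpr hqp
  have := Commute.orderOf_mul_eq_mul_orderOf_of_coprime hcz hcop
  rw [hordz, hords'] at this
  exact hiso (z * s') q hq hqp (by rw [this, mul_comm])
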